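/- arXiv:1403.6543 — 3 statements merged into one kernel-verified Lean document; each statement's English description precedes it below -/
import Mathlib

section
/- Let Φ (3N×M) and Ψ (3N×(3N−M)) together form an orthogonal matrix [Φ Ψ] (i.e., ΦᵀΦ = I, ΨᵀΨ = I, ΦᵀΨ = 0, and ΦΦᵀ + ΨΨᵀ = I). If A is symmetric positive definite, then A⁻¹Φ(ΦᵀA⁻¹Φ)⁻¹ = Φ − Ψ(ΨᵀAΨ)⁻¹ΨᵀAΦ. -/
open Matrix

lemma conj_posdef {m n : ℕ} {A : Matrix (Fin m) (Fin m) ℝ} (hA : A.PosDef)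
    (B : Matrix (Fin m) (Fin n) ℝ) (hB : Bᵀ * B = 1) : (Bᵀ * A * B).PosDef := by
  rw [Matrix.posDef_iff_dotProduct_mulVec]
  constructor
  · have h := Matrix.isHermitian_conjTranspose_mul_mul B hA.1
    simpa using h
  · intro x hx
    have hBx : B *ᵥ x ≠ 0 := by
      intro h
      apply hx
      have : Bᵀ *ᵥ (B *ᵥ x) = x := by
        rw [Matrix.mulVec_mulVec, hB, Matrix.one_mulVec]
      rw [h, Matrix.mulVec_zero] at this
      exact this.symm
    have key : x ⬝ᵥ (Bᵀ * A * B) *ᵥ x = (B *ᵥ x) ⬝ᵥ A *ᵥ (B *ᵥ x) := by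
      rw [← Matrix.mulVec_mulVec, ← Matrix.mulVec_mulVec, Matrix.dotProduct_mulVec,
        Matrix.vecMul_transpose]
    have h := hA.dotProduct_mulVec_pos hBx
    simpa [key] using h

theorem matrix_identity_AinvPhi
    (N M : ℕ) (Φ : Matrix (Fin (3 * N)) (Fin M) ℝ)
    (Ψ : Matrix (Fin (3 * N)) (Fin (3 * N - M)) ℝ)
    (A : Matrix (Fin (3 * N)) (Fin (3 * N)) ℝ)
    (hΦ : Φᵀ * Φ = 1) (hΨ : Ψᵀ * Ψ = 1) (hΦΨ : Φᵀ * Ψ = 0)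
    (hsum : Φ * Φᵀ + Ψ * Ψᵀ = 1) (hA : A.PosDef) :
    A⁻¹ * Φ * (Φᵀ * A⁻¹ * Φ)⁻¹ = Φ - Ψ * (Ψᵀ * A * Ψ)⁻¹ * Ψᵀ * A * Φ := by
  set X : Matrix (Fin (3 * N)) (Fin M) ℝ := Φ - Ψ * (Ψᵀ * A * Ψ)⁻¹ * Ψᵀ * A * Φ with hX
  have hS : (Ψᵀ * A * Ψ).PosDef := conj_posdef hA Ψ hΨ
  have hSinv : (Ψᵀ * A * Ψ) * (Ψᵀ * A * Ψ)⁻¹ = 1 :=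
    Matrix.mul_nonsing_inv _ (isUnit_iff_ne_zero.mpr hS.det_pos.ne')
  have hAdet : IsUnit A.det := isUnit_iff_ne_zero.mpr hA.det_pos.ne'
  have hA'A : A⁻¹ * A = 1 := Matrix.nonsing_inv_mul _ hAdet
  -- Ψᵀ A X = 0
  have hΨAX : Ψᵀ * (A * X) = 0 := by
    have h2 : Ψᵀ * (A * (Ψ * (Ψᵀ * A * Ψ)⁻¹ * Ψᵀ * A * Φ)) = Ψᵀ * (A * Φ) := by
      calc Ψᵀ * (A * (Ψ * (Ψᵀ * A * Ψ)⁻¹ * Ψᵀ * A * Φ))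
          = (Ψᵀ * A * Ψ) * (Ψᵀ * A * Ψ)⁻¹ * (Ψᵀ * (A * Φ)) := by
            simp only [Matrix.mul_assoc]
        _ = Ψᵀ * (A * Φ) := by rw [hSinv, Matrix.one_mul]
    rw [hX, Matrix.mul_sub, Matrix.mul_sub, h2, sub_self]
  -- A X = Φ (Φᵀ A X)
  have hAX : A * X = Φ * (Φᵀ * (A * X)) := by
    have h := congrArg (· * (A * X)) hsum
    simp only [Matrix.add_mul, Matrix.one_mul] at h
    have h3 : Ψ * Ψᵀ * (A * X) = 0 := by
      rw [Matrix.mul_assoc, hΨAX, Matrix.mul_zero]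
    rw [h3, add_zero, Matrix.mul_assoc] at h
    exact h.symm
  set C : Matrix (Fin M) (Fin M) ℝ := Φᵀ * (A * X) with hC
  -- Φᵀ X = 1
  have hΦX : Φᵀ * X = 1 := by
    rw [hX, Matrix.mul_sub, hΦ]
    have h4 : Φᵀ * (Ψ * (Ψᵀ * A * Ψ)⁻¹ * Ψᵀ * A * Φ) =
        (Φᵀ * Ψ) * ((Ψᵀ * A * Ψ)⁻¹ * Ψᵀ * A * Φ) := by
      simp only [Matrix.mul_assoc]
    rw [h4, hΦΨ, Matrix.zero_mul, sub_zero]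
  -- (Φᵀ A⁻¹ Φ) C = 1
  have hBC : (Φᵀ * A⁻¹ * Φ) * C = 1 := by
    have : (Φᵀ * A⁻¹ * Φ) * C = Φᵀ * (A⁻¹ * (Φ * C)) := by
      simp only [Matrix.mul_assoc]
    rw [this, ← hAX, ← Matrix.mul_assoc A⁻¹ A X, hA'A, Matrix.one_mul, hΦX]
  have hBinv : (Φᵀ * A⁻¹ * Φ)⁻¹ = C := Matrix.inv_eq_right_inv hBC
  rw [hBinv, Matrix.mul_assoc, ← hAX, ← Matrix.mul_assoc A⁻¹ A X, hA'A, Matrix.one_mul]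
end

section
/- Under the same setup, the memory function θ(t) = −ΦᵀAΨ cos(Ωt) ΨᵀA⁻¹Φ(ΦᵀA⁻¹Φ)⁻¹, where Ω = (ΨᵀAΨ)^{1/2}, equals ΦᵀAΨ cos(Ωt) Ω⁻² ΨᵀAΦ. -/
open Matrix

lemma my_cfc_mul {n : ℕ} {A : Matrix (Fin n) (Fin n) ℝ} (hA : A.IsHermitian)
    (f g : ℝ → ℝ) : hA.cfc f * hA.cfc g = hA.cfc (fun x => f x * g x) := by
  unfold Matrix.IsHermitian.cfc
  have h {a b c d e f : Matrix (Fin n) (Fin n) ℝ} :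
      (a * b * c) * (d * e * f) = a * (b * (c * d) * e) * f := by
    simp only [mul_assoc]
  rw [← map_mul]
  simp [diagonal_mul_diagonal, Function.comp_def]

lemma my_cfc_congr {n : ℕ} {A : Matrix (Fin n) (Fin n) ℝ} (hA : A.IsHermitian)
    (f g : ℝ → ℝ) (h : ∀ i, f (hA.eigenvalues i) = g (hA.eigenvalues i)) :
    hA.cfc f = hA.cfc g := by
  unfold Matrix.IsHermitian.cfc
  have : (RCLike.ofReal ∘ f ∘ hA.eigenvalues : Fin n → ℝ)
      = RCLike.ofReal ∘ g ∘ hA.eigenvalues := by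
    funext i; simp [h i]
  rw [this]

lemma my_cfc_one {n : ℕ} {A : Matrix (Fin n) (Fin n) ℝ} (hA : A.IsHermitian) :
    hA.cfc (fun _ => 1) = 1 := by
  unfold Matrix.IsHermitian.cfc
  simp [Function.comp_def, Pi.one_def (M := fun _ : Fin n => ℝ)]

lemma my_cfc_id {n : ℕ} {A : Matrix (Fin n) (Fin n) ℝ} (hA : A.IsHermitian) :
    hA.cfc id = A := by
  conv_rhs => rw [hA.spectral_theorem]
  rfl

/-- The memory function −ΦᵀAΨ cos(Ωt) ΨᵀA⁻¹Φ(ΦᵀA⁻¹Φ)⁻¹ equals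
ΦᵀAΨ cos(Ωt) Ω⁻² ΨᵀAΦ, where Ω = (ΨᵀAΨ)^{1/2} and `cos (Ω t)`, `Ω⁻²`
are defined via the spectral functional calculus of Â = ΨᵀAΨ. -/
theorem memory_kernel_simplification
    (N M : ℕ) (Φ : Matrix (Fin (3 * N)) (Fin M) ℝ)
    (Ψ : Matrix (Fin (3 * N)) (Fin (3 * N - M)) ℝ)
    (A : Matrix (Fin (3 * N)) (Fin (3 * N)) ℝ)
    (hΦ : Φᵀ * Φ = 1) (hΨ : Ψᵀ * Ψ = 1) (hΦΨ : Φᵀ * Ψ = 0)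
    (hsum : Φ * Φᵀ + Ψ * Ψᵀ = 1) (hA : A.PosDef)
    (hH : (Ψᵀ * A * Ψ).IsHermitian) (t : ℝ) :
    -- cos (Ω t) via functional calculus on Â = ΨᵀAΨ
    let cosΩt := hH.cfc (fun x => Real.cos (Real.sqrt x * t))
    -- Ω⁻² via functional calculus
    let Ωinv2 := hH.cfc (fun x => x⁻¹)
    (-(Φᵀ * A * Ψ) * cosΩt * (Ψᵀ * A⁻¹ * Φ * (Φᵀ * A⁻¹ * Φ)⁻¹)
      = (Φᵀ * A * Ψ) * cosΩt * Ωinv2 * (Ψᵀ * A * Φ)) := by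
  intro cosΩt Ωinv2
  show (-(Φᵀ * A * Ψ) * hH.cfc (fun x => Real.cos (Real.sqrt x * t))
      * (Ψᵀ * A⁻¹ * Φ * (Φᵀ * A⁻¹ * Φ)⁻¹)
    = (Φᵀ * A * Ψ) * hH.cfc (fun x => Real.cos (Real.sqrt x * t))
      * hH.cfc (fun x => x⁻¹) * (Ψᵀ * A * Φ))
  have hΦconj : Φᴴ = Φᵀ := by
    ext i j; simp [conjTranspose_apply]
  -- injectivity helpers
  have hΨinj : ∀ x : Fin (3 * N - M) → ℝ, Ψ *ᵥ x = 0 → x = 0 := by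
    intro x hx
    have : (Ψᵀ * Ψ) *ᵥ x = 0 := by rw [← mulVec_mulVec, hx, mulVec_zero]
    rwa [hΨ, one_mulVec] at this
  have hΦinj : ∀ x : Fin M → ℝ, Φ *ᵥ x = 0 → x = 0 := by
    intro x hx
    have : (Φᵀ * Φ) *ᵥ x = 0 := by rw [← mulVec_mulVec, hx, mulVec_zero]
    rwa [hΦ, one_mulVec] at this
  -- Â := ΨᵀAΨ is positive definite
  have hAh : (Ψᵀ * A * Ψ).PosDef := by
    refine Matrix.PosDef.of_dotProduct_mulVec_pos hH (fun x hx => ?_)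
    have h1 : (Ψᵀ * A * Ψ) *ᵥ x = Ψᵀ *ᵥ (A *ᵥ (Ψ *ᵥ x)) := by
      rw [mulVec_mulVec, mulVec_mulVec]
    have h2 : dotProduct (star x) ((Ψᵀ * A * Ψ) *ᵥ x)
        = dotProduct (star (Ψ *ᵥ x)) (A *ᵥ (Ψ *ᵥ x)) := by
      rw [h1, dotProduct_mulVec, vecMul_transpose]
      simp [star_trivial]
    rw [h2]
    exact hA.dotProduct_mulVec_pos (x := Ψ *ᵥ x) (fun h => hx (hΨinj x h))
  -- B := ΦᵀA⁻¹Φ is positive definite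
  have hB : (Φᵀ * A⁻¹ * Φ).PosDef := by
    have hAinv := hA.inv
    refine Matrix.PosDef.of_dotProduct_mulVec_pos ?_ (fun x hx => ?_)
    · have := isHermitian_conjTranspose_mul_mul Φ hAinv.isHermitian
      rwa [hΦconj] at this
    · have h1 : (Φᵀ * A⁻¹ * Φ) *ᵥ x = Φᵀ *ᵥ (A⁻¹ *ᵥ (Φ *ᵥ x)) := by
        rw [mulVec_mulVec, mulVec_mulVec]
      have h2 : dotProduct (star x) ((Φᵀ * A⁻¹ * Φ) *ᵥ x)
          = dotProduct (star (Φ *ᵥ x)) (A⁻¹ *ᵥ (Φ *ᵥ x)) := by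
        rw [h1, dotProduct_mulVec, vecMul_transpose]
        simp [star_trivial]
      rw [h2]
      exact hAinv.dotProduct_mulVec_pos (x := Φ *ᵥ x) (fun h => hx (hΦinj x h))
  have hAAinv : A * A⁻¹ = 1 := mul_nonsing_inv A (isUnit_iff_isUnit_det A |>.mp hA.isUnit)
  have hAhinv : (Ψᵀ * A * Ψ) * (Ψᵀ * A * Ψ)⁻¹ = 1 :=
    mul_nonsing_inv _ (isUnit_iff_isUnit_det _ |>.mp hAh.isUnit)
  have hAhinv' : (Ψᵀ * A * Ψ)⁻¹ * (Ψᵀ * A * Ψ) = 1 :=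
    nonsing_inv_mul _ (isUnit_iff_isUnit_det _ |>.mp hAh.isUnit)
  have hBinv : (Φᵀ * A⁻¹ * Φ) * (Φᵀ * A⁻¹ * Φ)⁻¹ = 1 :=
    mul_nonsing_inv _ (isUnit_iff_isUnit_det _ |>.mp hB.isUnit)
  have hΨΦ : Ψᵀ * Φ = 0 := by
    have := congrArg Matrix.transpose hΦΨ
    simpa [transpose_mul] using this
  -- key block identity
  have key : (Ψᵀ * A * Φ) * (Φᵀ * A⁻¹ * Φ) + (Ψᵀ * A * Ψ) * (Ψᵀ * A⁻¹ * Φ) = 0 := by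
    have h1 : Ψᵀ * A * (Φ * Φᵀ + Ψ * Ψᵀ) * (A⁻¹ * Φ) = 0 := by
      rw [hsum, Matrix.mul_one, ← Matrix.mul_assoc, Matrix.mul_assoc Ψᵀ A A⁻¹, hAAinv,
        Matrix.mul_one, hΨΦ]
    calc (Ψᵀ * A * Φ) * (Φᵀ * A⁻¹ * Φ) + (Ψᵀ * A * Ψ) * (Ψᵀ * A⁻¹ * Φ)
        = Ψᵀ * A * (Φ * Φᵀ + Ψ * Ψᵀ) * (A⁻¹ * Φ) := by
          simp only [Matrix.mul_add, Matrix.add_mul, Matrix.mul_assoc]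
      _ = 0 := h1
  have key2 : Ψᵀ * A⁻¹ * Φ * (Φᵀ * A⁻¹ * Φ)⁻¹
      = -((Ψᵀ * A * Ψ)⁻¹ * (Ψᵀ * A * Φ)) := by
    have h3 : (Ψᵀ * A * Ψ) * (Ψᵀ * A⁻¹ * Φ) = -((Ψᵀ * A * Φ) * (Φᵀ * A⁻¹ * Φ)) := by
      
      have := congrArg (fun X => X - (Ψᵀ * A * Φ) * (Φᵀ * A⁻¹ * Φ)) key
      simpa [sub_eq_iff_eq_add, neg_add_eq_sub] using this
    have h4 : Ψᵀ * A⁻¹ * Φ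
        = -((Ψᵀ * A * Ψ)⁻¹ * ((Ψᵀ * A * Φ) * (Φᵀ * A⁻¹ * Φ))) := by
      rw [← Matrix.one_mul (Ψᵀ * A⁻¹ * Φ), ← hAhinv', Matrix.mul_assoc, h3, Matrix.mul_neg]
    rw [h4]
    calc -((Ψᵀ * A * Ψ)⁻¹ * ((Ψᵀ * A * Φ) * (Φᵀ * A⁻¹ * Φ))) * (Φᵀ * A⁻¹ * Φ)⁻¹
        = -((Ψᵀ * A * Ψ)⁻¹ * (Ψᵀ * A * Φ)
            * ((Φᵀ * A⁻¹ * Φ) * (Φᵀ * A⁻¹ * Φ)⁻¹)) := by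
          simp only [Matrix.mul_assoc, Matrix.neg_mul, Matrix.mul_neg]
      _ = -((Ψᵀ * A * Ψ)⁻¹ * (Ψᵀ * A * Φ)) := by rw [hBinv, Matrix.mul_one]
  -- hH.cfc (·⁻¹) = Â⁻¹
  have hΩ : hH.cfc (fun x => x⁻¹) = (Ψᵀ * A * Ψ)⁻¹ := by
    have hmul : (Ψᵀ * A * Ψ) * hH.cfc (fun x => x⁻¹) = 1 := by
      have h := my_cfc_mul hH id (fun x => x⁻¹)
      rw [my_cfc_id hH] at h
      rw [h, my_cfc_congr hH _ (fun _ => 1) (fun i => by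
        simp [mul_inv_cancel₀ (hAh.eigenvalues_pos i).ne'])]
      exact my_cfc_one hH
    exact (inv_eq_right_inv hmul).symm
  rw [key2, hΩ]
  simp only [Matrix.mul_assoc, Matrix.neg_mul, Matrix.mul_neg, neg_neg]
end

section
/- With [Φ Ψ] orthogonal and A symmetric positive definite, Q_x x = Ψ(ξ + (ΨᵀAΨ)⁻¹ΨᵀAΦ q) where x = Φq + Ψξ and Q_x = I − A⁻¹Φ(ΦᵀA⁻¹Φ)⁻¹Φᵀ. -/
open Matrix

lemma posdef_conj_aux {n m : Type*} [Fintype n] [Fintype m] [DecidableEq n] [DecidableEq m]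
    {A : Matrix n n ℝ} (hA : A.PosDef) (B : Matrix n m ℝ) (hB : Bᵀ * B = 1) :
    (Bᵀ * A * B).PosDef := by
  refine PosDef.of_dotProduct_mulVec_pos ?_ ?_
  · have := isHermitian_conjTranspose_mul_mul B hA.isHermitian
    rwa [conjTranspose_eq_transpose_of_trivial] at this
  · intro y hy
    have hBy : B *ᵥ y ≠ 0 := by
      intro h
      apply hy
      have := congrArg (fun v => Bᵀ *ᵥ v) h
      simpa [mulVec_mulVec, hB] using this
    have key : star y ⬝ᵥ (Bᵀ * A * B) *ᵥ y = star (B *ᵥ y) ⬝ᵥ A *ᵥ (B *ᵥ y) := by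
      rw [star_trivial, star_trivial, ← mulVec_mulVec, ← mulVec_mulVec,
        dotProduct_mulVec, vecMul_transpose]
    rw [key]
    exact hA.dotProduct_mulVec_pos hBy

/-- With `[Φ Ψ]` orthogonal and `A` positive definite,
`Q_x x = Ψ(ξ + (ΨᵀAΨ)⁻¹ΨᵀAΦ q)` where `x = Φq + Ψξ`. -/
theorem Qx_action
    (N M : ℕ) (Φ : Matrix (Fin (3 * N)) (Fin M) ℝ)
    (Ψ : Matrix (Fin (3 * N)) (Fin (3 * N - M)) ℝ)
    (A : Matrix (Fin (3 * N)) (Fin (3 * N)) ℝ)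
    (hΦ : Φᵀ * Φ = 1) (hΨ : Ψᵀ * Ψ = 1) (hΦΨ : Φᵀ * Ψ = 0)
    (hsum : Φ * Φᵀ + Ψ * Ψᵀ = 1) (hA : A.PosDef)
    (x : Fin (3 * N) → ℝ) :
    let q := Φᵀ *ᵥ x
    let ξ := Ψᵀ *ᵥ x
    let Qx := (1 : Matrix (Fin (3 * N)) (Fin (3 * N)) ℝ)
      - A⁻¹ * Φ * (Φᵀ * A⁻¹ * Φ)⁻¹ * Φᵀ
    Qx *ᵥ x = Ψ *ᵥ (ξ + (Ψᵀ * A * Ψ)⁻¹ *ᵥ ((Ψᵀ * A * Φ) *ᵥ q)) := by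
  intro q ξ Qx
  -- basic invertibility facts
  have hAdet : IsUnit A.det := isUnit_iff_ne_zero.mpr (ne_of_gt hA.det_pos)
  have hAinv : (A⁻¹).PosDef := hA.inv
  have hP : (Φᵀ * A⁻¹ * Φ).PosDef := posdef_conj_aux hAinv Φ hΦ
  have hS : (Ψᵀ * A * Ψ).PosDef := posdef_conj_aux hA Ψ hΨ
  have hPdet : IsUnit (Φᵀ * A⁻¹ * Φ).det := isUnit_iff_ne_zero.mpr (ne_of_gt hP.det_pos)
  have hSdet : IsUnit (Ψᵀ * A * Ψ).det := isUnit_iff_ne_zero.mpr (ne_of_gt hS.det_pos)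
  set S : Matrix (Fin (3 * N - M)) (Fin (3 * N - M)) ℝ := (Ψᵀ * A * Ψ)⁻¹ with hSdef
  set B : Matrix (Fin (3 * N)) (Fin M) ℝ := Φ - Ψ * S * (Ψᵀ * A * Φ) with hBdef
  -- ΨᵀA B = 0
  have hΨΦ : Ψᵀ * Φ = 0 := by
    have := congrArg Matrix.transpose hΦΨ
    simpa using this
  have h1 : Ψᵀ * A * B = 0 := by
    have hmul : (Ψᵀ * A * Ψ) * S = 1 := Matrix.mul_nonsing_inv _ hSdet
    have hre : Ψᵀ * A * (Ψ * S * (Ψᵀ * A * Φ)) = (Ψᵀ * A * Ψ * S) * (Ψᵀ * A * Φ) := by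
      simp only [Matrix.mul_assoc]
    rw [hBdef, Matrix.mul_sub, hre, hmul, Matrix.one_mul, sub_self]
  -- ΦᵀB = 1
  have h2 : Φᵀ * B = 1 := by
    have hre : Φᵀ * (Ψ * S * (Ψᵀ * A * Φ)) = (Φᵀ * Ψ) * (S * (Ψᵀ * A * Φ)) := by
      simp only [Matrix.mul_assoc]
    rw [hBdef, Matrix.mul_sub, hΦ, hre, hΦΨ, Matrix.zero_mul, sub_zero]
  -- A*B = Φ * (Φᵀ*A*B)
  have h3 : A * B = Φ * (Φᵀ * (A * B)) := by
    calc A * B = (Φ * Φᵀ + Ψ * Ψᵀ) * (A * B) := by rw [hsum, Matrix.one_mul]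
      _ = Φ * (Φᵀ * (A * B)) + Ψ * (Ψᵀ * A * B) := by
          rw [Matrix.add_mul, Matrix.mul_assoc, Matrix.mul_assoc, Matrix.mul_assoc Ψᵀ]
      _ = Φ * (Φᵀ * (A * B)) := by rw [h1, Matrix.mul_zero, add_zero]
  have h4 : B = A⁻¹ * Φ * (Φᵀ * (A * B)) := by
    calc B = A⁻¹ * (A * B) := by
            rw [← Matrix.mul_assoc, Matrix.nonsing_inv_mul _ hAdet, Matrix.one_mul]
      _ = A⁻¹ * (Φ * (Φᵀ * (A * B))) := by rw [← h3]
      _ = A⁻¹ * Φ * (Φᵀ * (A * B)) := by rw [Matrix.mul_assoc]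
  have h5 : (Φᵀ * A⁻¹ * Φ) * (Φᵀ * (A * B)) = 1 := by
    calc (Φᵀ * A⁻¹ * Φ) * (Φᵀ * (A * B)) = Φᵀ * (A⁻¹ * Φ * (Φᵀ * (A * B))) := by
          simp only [Matrix.mul_assoc]
      _ = Φᵀ * B := by rw [← h4]
      _ = 1 := h2
  have h6 : Φᵀ * (A * B) = (Φᵀ * A⁻¹ * Φ)⁻¹ :=
    (Matrix.inv_eq_right_inv h5).symm
  have hE : A⁻¹ * Φ * (Φᵀ * A⁻¹ * Φ)⁻¹ = B := by rw [← h6, ← h4]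
  -- now the matrix identity for Qx
  have hQx : Qx = Ψ * Ψᵀ + Ψ * S * (Ψᵀ * A * Φ) * Φᵀ := by
    show (1 : Matrix (Fin (3 * N)) (Fin (3 * N)) ℝ)
        - A⁻¹ * Φ * (Φᵀ * A⁻¹ * Φ)⁻¹ * Φᵀ = _
    rw [hE, hBdef, Matrix.sub_mul, ← hsum]
    abel
  rw [hQx, mulVec_add, add_mulVec]
  simp only [q, ξ, mulVec_mulVec, Matrix.mul_assoc]
end
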